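/- Let (c_m)_{m≥0} be an absolutely summable real sequence and f(t) = Σ_{m=0}^∞ c_m φ(2^m t) for t ∈ [0,1]. Then f(t) ≥ 0 for all t ∈ [0,1] if and only if Σ_{m=0}^n 2^m c_m ≥ 0 for all n ≥ 0. -/

import Mathlib

open MeasureTheory Filter Set

/-- The tent map: distance to the nearest integer. -/
noncomputable def phi (t : ℝ) : ℝ := ⨅ z : ℤ, |t - (z : ℝ)|

/-- A function in the Takagi class, for coefficient sequence `c`. -/
noncomputable def takagiF (c : ℕ → ℝ) (t : ℝ) : ℝ := ∑' m : ℕ, c m * phi (2 ^ m * t)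

/-- `T(ρ) = Σ 2^{-(n+2)} (1 - ρ n)`. -/
noncomputable def Trho (ρ : ℕ → ℝ) : ℝ := ∑' n : ℕ, (1 - ρ n) / 2 ^ (n + 2)

/-- A `{-1,+1}`-valued sequence. -/
def IsSign (ρ : ℕ → ℝ) : Prop := ∀ n, ρ n = 1 ∨ ρ n = -1

/-- `ρ` is a Rademacher expansion of `t`. -/
def IsRademacherExp (ρ : ℕ → ℝ) (t : ℝ) : Prop := IsSign ρ ∧ Trho ρ = t

/-- The step condition for coefficients `c`. -/
def StepCond (c : ℕ → ℝ) (ρ : ℕ → ℝ) : Prop :=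
  ∀ n : ℕ, 1 ≤ n → ρ n * ∑ m ∈ Finset.range n, 2 ^ m * c m * ρ m ≤ 0

noncomputable def sharpAux (c : ℕ → ℝ) : ℕ → ℝ × ℝ
  | 0 => (1, c 0)
  | n + 1 =>
    let S := (sharpAux c n).2
    let r : ℝ := if S ≤ 0 then 1 else -1
    (r, S + 2 ^ (n + 1) * c (n + 1) * r)

/-- The sequence `ρ♯` for coefficients `c`. -/
noncomputable def rhoSharp (c : ℕ → ℝ) (n : ℕ) : ℝ := (sharpAux c n).1

noncomputable def flatAux (c : ℕ → ℝ) : ℕ → ℝ × ℝ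
  | 0 => (1, c 0)
  | n + 1 =>
    let S := (flatAux c n).2
    let r : ℝ := if S < 0 then 1 else -1
    (r, S + 2 ^ (n + 1) * c (n + 1) * r)

/-- The sequence `ρ♭` for coefficients `c`. -/
noncomputable def rhoFlat (c : ℕ → ℝ) (n : ℕ) : ℝ := (flatAux c n).1

/-- The Takagi–Landsberg function with parameter `α`. -/
noncomputable def fTL (α : ℝ) (t : ℝ) : ℝ := ∑' m : ℕ, α ^ m / 2 ^ m * phi (2 ^ m * t)

noncomputable def sharpAuxTL (α : ℝ) : ℕ → ℝ × ℝ
  | 0 => (1, 1)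
  | n + 1 =>
    let S := (sharpAuxTL α n).2
    let r : ℝ := if S ≤ 0 then 1 else -1
    (r, S + α ^ (n + 1) * r)

/-- The sequence `ρ♯(α)` for the Takagi–Landsberg function. -/
noncomputable def rhoSharpTL (α : ℝ) (n : ℕ) : ℝ := (sharpAuxTL α n).1

noncomputable def flatAuxTL (α : ℝ) : ℕ → ℝ × ℝ
  | 0 => (1, 1)
  | n + 1 =>
    let S := (flatAuxTL α n).2
    let r : ℝ := if S < 0 then 1 else -1
    (r, S + α ^ (n + 1) * r)

/-- The sequence `ρ♭(α)` for the Takagi–Landsberg function. -/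
noncomputable def rhoFlatTL (α : ℝ) (n : ℕ) : ℝ := (flatAuxTL α n).1

/-- `τ♯(α) = T(ρ♯(α))`. -/
noncomputable def tauSharp (α : ℝ) : ℝ := Trho (rhoSharpTL α)

/-- `τ♭(α) = T(ρ♭(α))`. -/
noncomputable def tauFlat (α : ℝ) : ℝ := Trho (rhoFlatTL α)

/-- The Littlewood polynomial `p_{2n}(x) = 1 - x - x² - ⋯ - x^{2n}`. -/
noncomputable def p2n (n : ℕ) (x : ℝ) : ℝ := 1 - ∑ m ∈ Finset.Icc 1 (2 * n), x ^ m
lemma phi_bdd (t : ℝ) : BddBelow (Set.range fun z : ℤ => |t - (z : ℝ)|) :=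
  ⟨0, by rintro x ⟨z, rfl⟩; positivity⟩

lemma phi_le_abs (t : ℝ) (z : ℤ) : phi t ≤ |t - (z : ℝ)| := ciInf_le (phi_bdd t) z

lemma phi_nonneg (t : ℝ) : 0 ≤ phi t :=
  le_ciInf fun z => abs_nonneg _

lemma phi_le_half (t : ℝ) : phi t ≤ 1 / 2 :=
  (phi_le_abs t (round t)).trans (abs_sub_round t)

lemma phi_two_mul_le (u : ℝ) : phi (2 * u) ≤ 2 * phi u := by
  have h : phi (2 * u) / 2 ≤ phi u := by
    refine le_ciInf fun z => ?_
    have := phi_le_abs (2 * u) (2 * z)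
    have h2 : |2 * u - ((2 * z : ℤ) : ℝ)| = 2 * |u - (z : ℝ)| := by
      push_cast
      rw [show 2 * u - 2 * (z : ℝ) = 2 * (u - z) by ring, abs_mul, abs_two]
    linarith [this, h2 ▸ this]
  linarith

lemma phi_int (k : ℤ) : phi (k : ℝ) = 0 :=
  le_antisymm (by simpa using phi_le_abs (k : ℝ) k) (phi_nonneg _)

lemma phi_eq_self {x : ℝ} (h0 : 0 ≤ x) (h : x ≤ 1 / 2) : phi x = x := by
  refine le_antisymm (by simpa [abs_of_nonneg h0] using phi_le_abs x 0) (le_ciInf fun z => ?_)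
  rw [le_abs]
  rcases le_or_gt (z : ℝ) 0 with hz | hz
  · left; linarith
  · right
    have : (1 : ℝ) ≤ z := by exact_mod_cast hz
    linarith

lemma takagi_summable (c : ℕ → ℝ) (hc : Summable fun m => |c m|) (t : ℝ) :
    Summable fun m => c m * phi (2 ^ m * t) := by
  refine Summable.of_abs (hc.of_nonneg_of_le (fun m => abs_nonneg _) fun m => ?_)
  rw [abs_mul]
  calc |c m| * |phi (2 ^ m * t)| ≤ |c m| * 1 := by
        have h1 := phi_nonneg (2 ^ m * t)
        have h2 := phi_le_half (2 ^ m * t)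
        have : |phi (2 ^ m * t)| ≤ 1 := by rw [abs_of_nonneg h1]; linarith
        exact mul_le_mul_of_nonneg_left this (abs_nonneg _)
    _ = |c m| := mul_one _

lemma takagi_partial_key (c : ℕ → ℝ)
    (hs : ∀ n : ℕ, 0 ≤ ∑ m ∈ Finset.range (n + 1), 2 ^ m * c m) (t : ℝ) :
    ∀ N : ℕ, (∑ m ∈ Finset.range (N + 1), 2 ^ m * c m) * (phi (2 ^ (N + 1) * t) / 2 ^ (N + 1))
      ≤ ∑ m ∈ Finset.range (N + 1), c m * phi (2 ^ m * t) := by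
  have hstep : ∀ N : ℕ, phi (2 ^ (N + 1) * t) / 2 ^ (N + 1) ≤ phi (2 ^ N * t) / 2 ^ N := by
    intro N
    have := phi_two_mul_le (2 ^ N * t)
    have h2 : (2 : ℝ) ^ (N + 1) * t = 2 * (2 ^ N * t) := by ring
    rw [h2, pow_succ]
    rw [div_le_div_iff₀ (by positivity) (by positivity)]
    nlinarith [pow_pos (show (0:ℝ) < 2 by norm_num) N]
  intro N
  induction N with
  | zero =>
      calc (∑ m ∈ Finset.range (0 + 1), (2:ℝ) ^ m * c m) * (phi (2 ^ (0 + 1) * t) / 2 ^ (0 + 1))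
          ≤ (∑ m ∈ Finset.range (0 + 1), (2:ℝ) ^ m * c m) * (phi (2 ^ 0 * t) / 2 ^ 0) :=
            mul_le_mul_of_nonneg_left (hstep 0) (hs 0)
        _ = ∑ m ∈ Finset.range (0 + 1), c m * phi (2 ^ m * t) := by
            simp [Finset.sum_range_one, mul_comm]
  | succ N ih =>
      have hpow : ((2:ℝ) ^ (N + 1)) ≠ 0 := by positivity
      calc (∑ m ∈ Finset.range (N + 1 + 1), (2:ℝ) ^ m * c m) * (phi (2 ^ (N + 1 + 1) * t) / 2 ^ (N + 1 + 1))
          ≤ (∑ m ∈ Finset.range (N + 1 + 1), (2:ℝ) ^ m * c m) * (phi (2 ^ (N + 1) * t) / 2 ^ (N + 1)) :=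
            mul_le_mul_of_nonneg_left (hstep (N + 1)) (hs (N + 1))
        _ = (∑ m ∈ Finset.range (N + 1), (2:ℝ) ^ m * c m) * (phi (2 ^ (N + 1) * t) / 2 ^ (N + 1))
              + c (N + 1) * phi (2 ^ (N + 1) * t) := by
            rw [Finset.sum_range_succ]
            field_simp
        _ ≤ (∑ m ∈ Finset.range (N + 1), c m * phi (2 ^ m * t))
              + c (N + 1) * phi (2 ^ (N + 1) * t) := by linarith [ih]
        _ = ∑ m ∈ Finset.range (N + 1 + 1), c m * phi (2 ^ m * t) :=
            (Finset.sum_range_succ _ _).symm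

theorem takagi_class_nonneg_iff
    (c : ℕ → ℝ) (hc : Summable fun m => |c m|) :
    (∀ t ∈ Set.Icc (0 : ℝ) 1, 0 ≤ takagiF c t)
      ↔ ∀ n : ℕ, 0 ≤ ∑ m ∈ Finset.range (n + 1), 2 ^ m * c m := by
  constructor
  · intro h n
    set t : ℝ := (2 ^ (n + 1))⁻¹ with ht
    have htmem : t ∈ Set.Icc (0 : ℝ) 1 := by
      constructor
      · positivity
      · rw [ht, inv_le_one_iff₀]
        right
        exact one_le_pow₀ (by norm_num)
    have hval : takagiF c t = (∑ m ∈ Finset.range (n + 1), 2 ^ m * c m) / 2 ^ (n + 1) := by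
      rw [takagiF, tsum_eq_sum (s := Finset.range (n + 1)) ?_]
      · rw [Finset.sum_div]
        refine Finset.sum_congr rfl fun m hm => ?_
        have hmn : m ≤ n := Nat.lt_succ_iff.mp (Finset.mem_range.mp hm)
        have hx0 : (0:ℝ) ≤ 2 ^ m * t := by positivity
        have hx : (2:ℝ) ^ m * t ≤ 1 / 2 := by
          rw [ht, mul_inv_le_iff₀ (by positivity)]
          calc (2:ℝ) ^ m ≤ 2 ^ n := by gcongr <;> norm_num
            _ = 1 / 2 * 2 ^ (n + 1) := by rw [pow_succ]; ring
        rw [phi_eq_self hx0 hx]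
        ring
      · intro m hm
        have hmn : n + 1 ≤ m := Nat.not_lt.mp (fun h' => hm (Finset.mem_range.mpr h'))
        have key : (2:ℝ) ^ m * t = ((2 ^ (m - (n + 1)) : ℤ) : ℝ) := by
          rw [ht]
          push_cast
          field_simp
          rw [← pow_add, Nat.add_sub_of_le hmn]
        rw [key, phi_int, mul_zero]
    have h0 := h t htmem
    rw [hval] at h0
    have h2 : (0:ℝ) < 2 ^ (n + 1) := by positivity
    have h3 := mul_nonneg h0 h2.le
    rwa [div_mul_cancel₀ _ h2.ne'] at h3
  · intro hs t _
    have hsum := takagi_summable c hc t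
    have htend := hsum.hasSum.tendsto_sum_nat
    refine ge_of_tendsto' htend fun N => ?_
    cases N with
    | zero => simp
    | succ N =>
        refine le_trans ?_ (takagi_partial_key c hs t N)
        exact mul_nonneg (hs N) (div_nonneg (phi_nonneg _) (by positivity))
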